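/- If a bipartite graph G has no isolated vertices and no two vertices (in the same class) with identical neighborhoods, and G has a biclique edge cover of size k, then each bipartition class of G has at most 2^k vertices, and hence G has at most 2^{2k} edges. -/
import Mathlib


/-- `(A, B)` is a biclique of the bipartite graph with edge relation `E`. -/
def IsBiclique {α β : Type*} (E : α → β → Prop) (A : Set α) (B : Set β) : Prop :=
  ∀ a ∈ A, ∀ b ∈ B, E a b

/-- If a bipartite graph has no isolated vertices, no two vertices in the same class
    with identical neighborhoods, and a biclique edge cover of size `k`, then each class
    has at most `2^k` vertices and there are at most `2^(2k)` edges. -/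
theorem kernel_size_bound {α β : Type*} [Finite α] [Finite β] (E : α → β → Prop)
    (hiso1 : ∀ a : α, ∃ b, E a b) (hiso2 : ∀ b : β, ∃ a, E a b)
    (htwin1 : ∀ a a' : α, (∀ b, E a b ↔ E a' b) → a = a')
    (htwin2 : ∀ b b' : β, (∀ a, E a b ↔ E a b') → b = b')
    (k : ℕ) (A : Fin k → Set α) (B : Fin k → Set β)
    (hbic : ∀ ℓ, IsBiclique E (A ℓ) (B ℓ))
    (hcov : ∀ a b, E a b → ∃ ℓ, a ∈ A ℓ ∧ b ∈ B ℓ) :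
    Nat.card α ≤ 2 ^ k ∧ Nat.card β ≤ 2 ^ k ∧
      Nat.card {p : α × β // E p.1 p.2} ≤ 2 ^ (2 * k) := by
  have hA : Nat.card α ≤ 2 ^ k := by
    have hinj : Function.Injective (fun a : α => {ℓ : Fin k | a ∈ A ℓ}) := by
      intro a a' h
      apply htwin1
      intro b
      constructor
      · intro hE
        obtain ⟨ℓ, hℓA, hℓB⟩ := hcov a b hE
        have : a' ∈ A ℓ := by
          have := Set.ext_iff.mp h ℓ; simpa using this.mp hℓA
        exact hbic ℓ a' this b hℓB
      · intro hE
        obtain ⟨ℓ, hℓA, hℓB⟩ := hcov a' b hE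
        have : a ∈ A ℓ := by
          have := Set.ext_iff.mp h ℓ; simpa using this.mpr hℓA
        exact hbic ℓ a this b hℓB
    calc Nat.card α ≤ Nat.card (Set (Fin k)) := Nat.card_le_card_of_injective _ hinj
      _ = 2 ^ k := by simp [Nat.card_eq_fintype_card]
  have hB : Nat.card β ≤ 2 ^ k := by
    have hinj : Function.Injective (fun b : β => {ℓ : Fin k | b ∈ B ℓ}) := by
      intro b b' h
      apply htwin2
      intro a
      constructor
      · intro hE
        obtain ⟨ℓ, hℓA, hℓB⟩ := hcov a b hE
        have : b' ∈ B ℓ := by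
          have := Set.ext_iff.mp h ℓ; simpa using this.mp hℓB
        exact hbic ℓ a hℓA b' this
      · intro hE
        obtain ⟨ℓ, hℓA, hℓB⟩ := hcov a b' hE
        have : b ∈ B ℓ := by
          have := Set.ext_iff.mp h ℓ; simpa using this.mpr hℓB
        exact hbic ℓ a hℓA b this
    calc Nat.card β ≤ Nat.card (Set (Fin k)) := Nat.card_le_card_of_injective _ hinj
      _ = 2 ^ k := by simp [Nat.card_eq_fintype_card]
  refine ⟨hA, hB, ?_⟩
  calc Nat.card {p : α × β // E p.1 p.2} ≤ Nat.card (α × β) :=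
        Nat.card_le_card_of_injective _ Subtype.val_injective
    _ = Nat.card α * Nat.card β := Nat.card_prod α β
    _ ≤ 2 ^ k * 2 ^ k := Nat.mul_le_mul hA hB
    _ = 2 ^ (2 * k) := by ring
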